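/- Let N ≥ 1, p ∈ (0, 1), and q := 2√(p(1−p)). For k ∈ {0,1}^N let S_k := p^{(N − h(k))/2} (1 − p)^{h(k)/2} · ⊗_{i=1}^N σz^{k_i} be the dephasing Kraus operators on (ℂ²)^{⊗N} (h = Hamming weight), set M := Σ_{l,k} S_l ⟨l| S_x |k⟩ S_k and M₂ := Σ_{l,k} S_l ⟨l| S_x² |k⟩ S_k. For any unit vector ψ ∈ (ℂ²)^{⊗N} put v := ⟨ψ, S_z² ψ⟩ − ⟨ψ, S_z ψ⟩², Ξ := ⟨ψ, S_z M ψ⟩ − ⟨ψ, S_z ψ⟩⟨ψ, M ψ⟩ and Ω := ⟨ψ, M₂ ψ⟩ − ⟨ψ, M ψ⟩². Then Ξ = q v and Ω = N(1 − q²) + q² v, and if v > 0 the minimum over α ∈ ℝ of 4( v + 2αΞ + α²Ω ) equals 4 N v (1 − q²) / ( N(1 − q²) + q² v ). -/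

import Mathlib

open Matrix

/-- The Pauli matrices `σx` and `σz`. -/
def pauliX : Matrix (Fin 2) (Fin 2) ℂ := !![0, 1; 1, 0]
def pauliZ : Matrix (Fin 2) (Fin 2) ℂ := !![1, 0; 0, -1]

/-- `σ_A^{(i)}` : the one-qubit operator `A` acting on the `i`-th tensor factor of
`(ℂ²)^{⊗N}` and the identity elsewhere, written as a matrix indexed by bitstrings. -/
def pauliAt (N : ℕ) (i : ℕ) (A : Matrix (Fin 2) (Fin 2) ℂ) :
    Matrix (Fin N → Fin 2) (Fin N → Fin 2) ℂ :=
  Matrix.of fun x y =>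
    ∏ j : Fin N, if (j : ℕ) = i then A (x j) (y j) else (if x j = y j then 1 else 0)

/-- The `N`-fold tensor product of one-qubit operators, as a matrix indexed by
bitstrings. -/
def kronN (N : ℕ) (A : Fin N → Matrix (Fin 2) (Fin 2) ℂ) :
    Matrix (Fin N → Fin 2) (Fin N → Fin 2) ℂ :=
  Matrix.of fun x y => ∏ i : Fin N, A i (x i) (y i)

/-- The Hamming weight of a bitstring. -/
def hamWt (N : ℕ) (k : Fin N → Fin 2) : ℕ := ∑ i : Fin N, (k i : ℕ)

/-- The dephasing Kraus operator
`S_k = p^{(N-h(k))/2} (1-p)^{h(k)/2} ⊗_{i=1}^N σz^{k_i}`. -/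
noncomputable def krausOp (N : ℕ) (p : ℝ) (k : Fin N → Fin 2) :
    Matrix (Fin N → Fin 2) (Fin N → Fin 2) ℂ :=
  ((Real.sqrt (p ^ (N - hamWt N k)) * Real.sqrt ((1 - p) ^ hamWt N k) : ℝ) : ℂ) •
    kronN N (fun i => if k i = 1 then pauliZ else 1)

-- basic pauli algebra
lemma pauliZ_sq : pauliZ * pauliZ = 1 := by
  rw [pauliZ, Matrix.mul_fin_two, Matrix.one_fin_two]; norm_num

lemma pauliX_sq : pauliX * pauliX = 1 := by
  rw [pauliX, Matrix.mul_fin_two, Matrix.one_fin_two]; norm_num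

lemma kronN_mul (N : ℕ) (A B : Fin N → Matrix (Fin 2) (Fin 2) ℂ) :
    kronN N A * kronN N B = kronN N (fun i => A i * B i) := by
  ext x y
  simp only [kronN, Matrix.mul_apply, Matrix.of_apply]
  rw [Fintype.prod_sum (fun i (b : Fin 2) => A i (x i) b * B i b (y i))]
  exact Finset.sum_congr rfl fun z _ => (Finset.prod_mul_distrib).symm

lemma kronN_one (N : ℕ) : kronN N (fun _ => (1 : Matrix (Fin 2) (Fin 2) ℂ)) = 1 := by
  ext x y
  simp only [kronN, Matrix.of_apply, Matrix.one_apply, funext_iff]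
  rw [Fintype.prod_boole]
  simp

lemma pauliAt_eq_kronN (N : ℕ) (m : Fin N) (A : Matrix (Fin 2) (Fin 2) ℂ) :
    pauliAt N m.1 A = kronN N (fun j => if j = m then A else 1) := by
  ext x y
  simp only [pauliAt, kronN, Matrix.of_apply]
  refine Finset.prod_congr rfl fun j _ => ?_
  by_cases h : j = m
  · simp [h]
  · have : ¬((j:ℕ) = (m:ℕ)) := fun h' => h (Fin.val_injective h')
    simp [h, this, Matrix.one_apply]

noncomputable def wgt (p : ℝ) (b : Fin 2) : ℝ :=
  if b = 1 then Real.sqrt (1 - p) else Real.sqrt p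

def Zk (b : Fin 2) : Matrix (Fin 2) (Fin 2) ℂ := if b = 1 then pauliZ else 1

lemma fin2_cases (b : Fin 2) : b = 0 ∨ b = 1 := by revert b; decide

lemma sqrt_pow' (p : ℝ) (hp : 0 ≤ p) (n : ℕ) :
    Real.sqrt (p ^ n) = Real.sqrt p ^ n := by
  induction n with
  | zero => simp
  | succ n ih => rw [pow_succ, pow_succ, Real.sqrt_mul (by positivity), ih]

lemma kraus_coeff (N : ℕ) (p : ℝ) (hp0 : 0 ≤ p) (hp1 : p ≤ 1) (k : Fin N → Fin 2) :
    Real.sqrt (p ^ (N - hamWt N k)) * Real.sqrt ((1 - p) ^ hamWt N k)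
      = ∏ i, wgt p (k i) := by
  have h1 : ∀ i, wgt p (k i)
      = Real.sqrt p ^ (1 - (k i : ℕ)) * Real.sqrt (1 - p) ^ (k i : ℕ) := by
    intro i
    rcases fin2_cases (k i) with h | h <;> simp [wgt, h]
  rw [Finset.prod_congr rfl (fun i _ => h1 i), Finset.prod_mul_distrib,
    Finset.prod_pow_eq_pow_sum, Finset.prod_pow_eq_pow_sum]
  have hsum : ∑ i, (1 - (k i : ℕ)) = N - hamWt N k := by
    have h2 : ∀ i : Fin N, (1 - (k i : ℕ)) + (k i : ℕ) = 1 := by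
      intro i; have := (k i).isLt; omega
    have h3 : (∑ i, (1 - (k i : ℕ))) + ∑ i, (k i : ℕ) = N := by
      rw [← Finset.sum_add_distrib, Finset.sum_congr rfl (fun i _ => h2 i)]
      simp
    have h4 : hamWt N k ≤ N := by
      unfold hamWt at *; omega
    unfold hamWt at *; omega
  rw [hsum, sqrt_pow' p hp0, sqrt_pow' (1 - p) (by linarith)]
  rfl

noncomputable def siteSum (p : ℝ) (A : Matrix (Fin 2) (Fin 2) ℂ) (c d : Fin 2) : ℂ :=
  ∑ a : Fin 2, ∑ b : Fin 2,
    A a b * ((wgt p a : ℝ) : ℂ) * ((wgt p b : ℝ) : ℂ) * ((Zk a * Zk b) c d)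

lemma key (N : ℕ) (p : ℝ) (hp0 : 0 ≤ p) (hp1 : p ≤ 1)
    (G : Fin N → Matrix (Fin 2) (Fin 2) ℂ) :
    (∑ l : Fin N → Fin 2, ∑ k : Fin N → Fin 2,
        (kronN N G) l k • (krausOp N p l * krausOp N p k))
      = Matrix.of fun x y => ∏ i, siteSum p (G i) (x i) (y i) := by
  ext x y
  have hK : ∀ l k : Fin N → Fin 2, (krausOp N p l * krausOp N p k) x y
      = ∏ i, (((wgt p (l i) : ℝ) : ℂ) * ((wgt p (k i) : ℝ) : ℂ)
          * (Zk (l i) * Zk (k i)) (x i) (y i)) := by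
    intro l k
    show ((((Real.sqrt (p ^ (N - hamWt N l)) * Real.sqrt ((1 - p) ^ hamWt N l) : ℝ)) : ℂ) •
      kronN N (fun i => Zk (l i)) *
      ((((Real.sqrt (p ^ (N - hamWt N k)) * Real.sqrt ((1 - p) ^ hamWt N k) : ℝ)) : ℂ) •
      kronN N (fun i => Zk (k i)))) x y = _
    rw [Matrix.smul_mul, Matrix.mul_smul, kronN_mul]
    simp only [Matrix.smul_apply, smul_eq_mul, kronN, Matrix.of_apply]
    rw [kraus_coeff N p hp0 hp1 l, kraus_coeff N p hp0 hp1 k]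
    push_cast
    rw [← Finset.prod_mul_distrib, ← Finset.prod_mul_distrib]
    exact Finset.prod_congr rfl fun i _ => by ring
  simp only [Matrix.sum_apply, Matrix.smul_apply, smul_eq_mul, Matrix.of_apply]
  calc
    ∑ l : Fin N → Fin 2, ∑ k : Fin N → Fin 2,
        kronN N G l k * (krausOp N p l * krausOp N p k) x y
      = ∑ l : Fin N → Fin 2, ∑ k : Fin N → Fin 2, ∏ i,
          (G i (l i) (k i) * ((wgt p (l i) : ℝ) : ℂ) * ((wgt p (k i) : ℝ) : ℂ)
            * (Zk (l i) * Zk (k i)) (x i) (y i)) := by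
        refine Finset.sum_congr rfl fun l _ => Finset.sum_congr rfl fun k _ => ?_
        rw [hK l k]
        show (∏ i, G i (l i) (k i)) * _ = _
        rw [← Finset.prod_mul_distrib]
        exact Finset.prod_congr rfl fun i _ => by ring
    _ = ∑ lk : (Fin N → Fin 2) × (Fin N → Fin 2), ∏ i,
          (G i (lk.1 i) (lk.2 i) * ((wgt p (lk.1 i) : ℝ) : ℂ) * ((wgt p (lk.2 i) : ℝ) : ℂ)
            * (Zk (lk.1 i) * Zk (lk.2 i)) (x i) (y i)) := by
        rw [Fintype.sum_prod_type]
    _ = ∑ t : Fin N → Fin 2 × Fin 2, ∏ i,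
          (G i (t i).1 (t i).2 * ((wgt p ((t i).1) : ℝ) : ℂ) * ((wgt p ((t i).2) : ℝ) : ℂ)
            * (Zk ((t i).1) * Zk ((t i).2)) (x i) (y i)) :=
        (Fintype.sum_equiv (Equiv.arrowProdEquivProdArrow (Fin N) (fun _ => Fin 2) (fun _ => Fin 2)) _ _
          (fun t => rfl)).symm
    _ = ∏ i, ∑ ab : Fin 2 × Fin 2,
          (G i ab.1 ab.2 * ((wgt p ab.1 : ℝ) : ℂ) * ((wgt p ab.2 : ℝ) : ℂ)
            * (Zk ab.1 * Zk ab.2) (x i) (y i)) :=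
        (Fintype.prod_sum fun i (ab : Fin 2 × Fin 2) =>
          G i ab.1 ab.2 * ((wgt p ab.1 : ℝ) : ℂ) * ((wgt p ab.2 : ℝ) : ℂ)
            * (Zk ab.1 * Zk ab.2) (x i) (y i)).symm
    _ = ∏ i, siteSum p (G i) (x i) (y i) := by
        refine Finset.prod_congr rfl fun i _ => ?_
        rw [siteSum, Fintype.sum_prod_type]

lemma siteSum_eq (p : ℝ) (hp0 : 0 ≤ p) (hp1 : p ≤ 1) (A : Matrix (Fin 2) (Fin 2) ℂ)
    (c d : Fin 2) :
    siteSum p A c d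
      = ((p : ℂ) * A 0 0 + (((1 - p : ℝ)) : ℂ) * A 1 1) * (1 : Matrix (Fin 2) (Fin 2) ℂ) c d
        + ((Real.sqrt (p * (1 - p)) : ℝ) : ℂ) * (A 0 1 + A 1 0) * pauliZ c d := by
  have z00 : Zk 0 * Zk 0 = (1 : Matrix (Fin 2) (Fin 2) ℂ) := by
    rw [show Zk 0 = 1 from rfl, one_mul]
  have z01 : Zk 0 * Zk 1 = pauliZ := by
    rw [show Zk 0 = 1 from rfl, show Zk 1 = pauliZ from rfl, one_mul]
  have z10 : Zk 1 * Zk 0 = pauliZ := by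
    rw [show Zk 0 = 1 from rfl, show Zk 1 = pauliZ from rfl, mul_one]
  have z11 : Zk 1 * Zk 1 = (1 : Matrix (Fin 2) (Fin 2) ℂ) := by
    rw [show Zk 1 = pauliZ from rfl, pauliZ_sq]
  have h1 : ((Real.sqrt p : ℝ) : ℂ) * ((Real.sqrt p : ℝ) : ℂ) = ((p : ℝ) : ℂ) := by
    rw [← Complex.ofReal_mul, Real.mul_self_sqrt hp0]
  have h2 : ((Real.sqrt (1 - p) : ℝ) : ℂ) * ((Real.sqrt (1 - p) : ℝ) : ℂ)
      = (((1 - p) : ℝ) : ℂ) := by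
    rw [← Complex.ofReal_mul, Real.mul_self_sqrt (by linarith)]
  have h3 : ((Real.sqrt p : ℝ) : ℂ) * ((Real.sqrt (1 - p) : ℝ) : ℂ)
      = ((Real.sqrt (p * (1 - p)) : ℝ) : ℂ) := by
    rw [← Complex.ofReal_mul, ← Real.sqrt_mul hp0]
  simp only [siteSum, Fin.sum_univ_two, show wgt p 0 = Real.sqrt p from rfl,
    show wgt p 1 = Real.sqrt (1 - p) from rfl, z00, z01, z10, z11]
  linear_combination (A 0 0 * (1 : Matrix (Fin 2) (Fin 2) ℂ) c d) * h1
    + (A 1 1 * (1 : Matrix (Fin 2) (Fin 2) ℂ) c d) * h2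
    + ((A 0 1 + A 1 0) * pauliZ c d) * h3

lemma siteSum_one (p : ℝ) (hp0 : 0 ≤ p) (hp1 : p ≤ 1) (c d : Fin 2) :
    siteSum p 1 c d = (1 : Matrix (Fin 2) (Fin 2) ℂ) c d := by
  rw [siteSum_eq p hp0 hp1,
    show (1 : Matrix (Fin 2) (Fin 2) ℂ) 0 0 = 1 from Matrix.one_apply_eq 0,
    show (1 : Matrix (Fin 2) (Fin 2) ℂ) 1 1 = 1 from Matrix.one_apply_eq 1,
    show (1 : Matrix (Fin 2) (Fin 2) ℂ) 0 1 = 0 from Matrix.one_apply_ne (by decide),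
    show (1 : Matrix (Fin 2) (Fin 2) ℂ) 1 0 = 0 from Matrix.one_apply_ne (by decide)]
  push_cast
  ring

lemma siteSum_X (p : ℝ) (hp0 : 0 ≤ p) (hp1 : p ≤ 1) (c d : Fin 2) :
    siteSum p pauliX c d
      = ((2 * Real.sqrt (p * (1 - p)) : ℝ) : ℂ) * pauliZ c d := by
  rw [siteSum_eq p hp0 hp1,
    show pauliX 0 0 = 0 from rfl, show pauliX 1 1 = 0 from rfl,
    show pauliX 0 1 = 1 from rfl, show pauliX 1 0 = 1 from rfl]
  push_cast
  ring

lemma prod_site_ite (N : ℕ) (p : ℝ) (hp0 : 0 ≤ p) (hp1 : p ≤ 1) (m : Fin N)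
    (x y : Fin N → Fin 2) :
    (∏ i, siteSum p (if i = m then pauliX else 1) (x i) (y i))
      = ((2 * Real.sqrt (p * (1 - p)) : ℝ) : ℂ) * (pauliAt N m.1 pauliZ) x y := by
  rw [pauliAt_eq_kronN]
  have step : ∀ i : Fin N, siteSum p (if i = m then pauliX else 1) (x i) (y i)
      = (if i = m then ((2 * Real.sqrt (p * (1 - p)) : ℝ) : ℂ) else 1)
        * ((if i = m then pauliZ else 1) (x i) (y i)) := by
    intro i
    by_cases h : i = m
    · simp only [h, if_pos rfl, if_true]
      rw [siteSum_X p hp0 hp1]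
    · simp only [if_neg h]
      rw [siteSum_one p hp0 hp1, one_mul]
  rw [Finset.prod_congr rfl (fun i _ => step i), Finset.prod_mul_distrib,
    Finset.prod_ite_eq' Finset.univ m
      (fun _ => ((2 * Real.sqrt (p * (1 - p)) : ℝ) : ℂ))]
  simp only [Finset.mem_univ, if_true]
  rfl

lemma M_eq (N : ℕ) (p : ℝ) (hp0 : 0 ≤ p) (hp1 : p ≤ 1) :
    (∑ l : Fin N → Fin 2, ∑ k : Fin N → Fin 2,
        ((∑ m : Fin N, pauliAt N m.1 pauliX) l k) • (krausOp N p l * krausOp N p k))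
      = ((2 * Real.sqrt (p * (1 - p)) : ℝ) : ℂ) • ∑ m : Fin N, pauliAt N m.1 pauliZ := by
  have swap : (∑ l : Fin N → Fin 2, ∑ k : Fin N → Fin 2,
        ((∑ m : Fin N, pauliAt N m.1 pauliX) l k) • (krausOp N p l * krausOp N p k))
      = ∑ m : Fin N, ∑ l : Fin N → Fin 2, ∑ k : Fin N → Fin 2,
        ((kronN N (fun j => if j = m then pauliX else 1)) l k)
          • (krausOp N p l * krausOp N p k) := by
    calc (∑ l : Fin N → Fin 2, ∑ k : Fin N → Fin 2,
        ((∑ m : Fin N, pauliAt N m.1 pauliX) l k) • (krausOp N p l * krausOp N p k))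
        = ∑ l : Fin N → Fin 2, ∑ k : Fin N → Fin 2, ∑ m : Fin N,
            ((kronN N (fun j => if j = m then pauliX else 1)) l k)
              • (krausOp N p l * krausOp N p k) := by
          refine Finset.sum_congr rfl fun l _ => Finset.sum_congr rfl fun k _ => ?_
          rw [Matrix.sum_apply, Finset.sum_smul]
          exact Finset.sum_congr rfl fun m _ => by rw [pauliAt_eq_kronN]
      _ = ∑ l : Fin N → Fin 2, ∑ m : Fin N, ∑ k : Fin N → Fin 2,
            ((kronN N (fun j => if j = m then pauliX else 1)) l k)
              • (krausOp N p l * krausOp N p k) :=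
          Finset.sum_congr rfl fun l _ => Finset.sum_comm
      _ = ∑ m : Fin N, ∑ l : Fin N → Fin 2, ∑ k : Fin N → Fin 2,
            ((kronN N (fun j => if j = m then pauliX else 1)) l k)
              • (krausOp N p l * krausOp N p k) := Finset.sum_comm
  rw [swap]
  ext x y
  rw [Matrix.sum_apply]
  rw [Finset.sum_congr rfl (fun m _ => by
    rw [key N p hp0 hp1 (fun j => if j = m then pauliX else 1)])]
  simp only [Matrix.of_apply]
  rw [Finset.sum_congr rfl (fun m _ => prod_site_ite N p hp0 hp1 m x y)]
  rw [Matrix.smul_apply, Matrix.sum_apply, smul_eq_mul, Finset.mul_sum]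

lemma pauliAt_mul_self (N : ℕ) (m : Fin N) :
    pauliAt N m.1 pauliZ * pauliAt N m.1 pauliZ = 1 := by
  rw [pauliAt_eq_kronN, kronN_mul]
  have h : (fun j : Fin N => (if j = m then pauliZ else 1) * (if j = m then pauliZ else 1))
      = fun _ => (1 : Matrix (Fin 2) (Fin 2) ℂ) := by
    funext j
    by_cases h : j = m <;> simp [h, pauliZ_sq]
  rw [h, kronN_one]

lemma prod_site_ite2 (N : ℕ) (p : ℝ) (hp0 : 0 ≤ p) (hp1 : p ≤ 1) (m m' : Fin N)
    (hmm : m ≠ m') (x y : Fin N → Fin 2) :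
    (∏ i, siteSum p ((if i = m then pauliX else 1) * (if i = m' then pauliX else 1))
        (x i) (y i))
      = ((2 * Real.sqrt (p * (1 - p)) : ℝ) : ℂ) ^ 2
        * (pauliAt N m.1 pauliZ * pauliAt N m'.1 pauliZ) x y := by
  set Q : ℂ := ((2 * Real.sqrt (p * (1 - p)) : ℝ) : ℂ) with hQ
  have step : ∀ i : Fin N,
      siteSum p ((if i = m then pauliX else 1) * (if i = m' then pauliX else 1)) (x i) (y i)
        = ((if i = m then Q else 1) * (if i = m' then Q else 1))
          * (((if i = m then pauliZ else 1) * (if i = m' then pauliZ else 1)) (x i) (y i)) := by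
    intro i
    by_cases h : i = m
    · have h' : ¬ i = m' := by rw [h]; exact hmm
      simp only [if_pos h, if_neg h', mul_one]
      rw [siteSum_X p hp0 hp1]
    · by_cases h' : i = m'
      · simp only [if_neg h, if_pos h', one_mul]
        rw [siteSum_X p hp0 hp1]
      · simp only [if_neg h, if_neg h', one_mul, mul_one]
        rw [siteSum_one p hp0 hp1]
  rw [Finset.prod_congr rfl (fun i _ => step i), Finset.prod_mul_distrib,
    Finset.prod_mul_distrib,
    Finset.prod_ite_eq' Finset.univ m (fun _ => Q),
    Finset.prod_ite_eq' Finset.univ m' (fun _ => Q),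
    pauliAt_eq_kronN, pauliAt_eq_kronN, kronN_mul]
  simp only [Finset.mem_univ, if_true]
  rw [sq]
  rfl

lemma T_eq (N : ℕ) (p : ℝ) (hp0 : 0 ≤ p) (hp1 : p ≤ 1) (m m' : Fin N) :
    (∑ l : Fin N → Fin 2, ∑ k : Fin N → Fin 2,
        ((kronN N (fun j => (if j = m then pauliX else 1) * (if j = m' then pauliX else 1))) l k)
          • (krausOp N p l * krausOp N p k))
      = if m = m' then (1 : Matrix (Fin N → Fin 2) (Fin N → Fin 2) ℂ)
        else ((2 * Real.sqrt (p * (1 - p)) : ℝ) : ℂ) ^ 2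
          • (pauliAt N m.1 pauliZ * pauliAt N m'.1 pauliZ) := by
  rw [key N p hp0 hp1]
  by_cases h : m = m'
  · subst h
    rw [if_pos rfl]
    have hG : (fun j : Fin N => (if j = m then pauliX else 1) * (if j = m then pauliX else 1))
        = fun _ => (1 : Matrix (Fin 2) (Fin 2) ℂ) := by
      funext j
      by_cases h : j = m <;> simp [h, pauliX_sq]
    ext x y
    simp only [Matrix.of_apply]
    calc (∏ i, siteSum p ((if i = m then pauliX else 1) * (if i = m then pauliX else 1))
            (x i) (y i))
        = ∏ i, (1 : Matrix (Fin 2) (Fin 2) ℂ) (x i) (y i) :=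
          Finset.prod_congr rfl fun i _ => by
            rw [congrFun hG i]; exact siteSum_one p hp0 hp1 (x i) (y i)
      _ = kronN N (fun _ => (1 : Matrix (Fin 2) (Fin 2) ℂ)) x y := rfl
      _ = (1 : Matrix (Fin N → Fin 2) (Fin N → Fin 2) ℂ) x y := by rw [kronN_one]
  · rw [if_neg h]
    ext x y
    simp only [Matrix.of_apply, Matrix.smul_apply, smul_eq_mul]
    rw [prod_site_ite2 N p hp0 hp1 m m' h x y]

lemma M2_eq (N : ℕ) (p : ℝ) (hp0 : 0 ≤ p) (hp1 : p ≤ 1) :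
    (∑ l : Fin N → Fin 2, ∑ k : Fin N → Fin 2,
        (((∑ m : Fin N, pauliAt N m.1 pauliX) * (∑ m : Fin N, pauliAt N m.1 pauliX)) l k)
          • (krausOp N p l * krausOp N p k))
      = ((N : ℂ) * (1 - ((2 * Real.sqrt (p * (1 - p)) : ℝ) : ℂ) ^ 2))
          • (1 : Matrix (Fin N → Fin 2) (Fin N → Fin 2) ℂ)
        + ((2 * Real.sqrt (p * (1 - p)) : ℝ) : ℂ) ^ 2
          • ((∑ m : Fin N, pauliAt N m.1 pauliZ) * (∑ m : Fin N, pauliAt N m.1 pauliZ)) := by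
  set Q : ℂ := ((2 * Real.sqrt (p * (1 - p)) : ℝ) : ℂ) with hQ
  have hentry : ∀ l k : Fin N → Fin 2,
      (((∑ m : Fin N, pauliAt N m.1 pauliX) * (∑ m : Fin N, pauliAt N m.1 pauliX)) l k)
        • (krausOp N p l * krausOp N p k)
      = ∑ m : Fin N, ∑ m' : Fin N,
          ((kronN N (fun j => (if j = m then pauliX else 1) * (if j = m' then pauliX else 1))) l k)
            • (krausOp N p l * krausOp N p k) := by
    intro l k
    rw [Finset.sum_mul_sum, Matrix.sum_apply, Finset.sum_smul]
    refine Finset.sum_congr rfl fun m _ => ?_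
    rw [Matrix.sum_apply, Finset.sum_smul]
    refine Finset.sum_congr rfl fun m' _ => ?_
    rw [pauliAt_eq_kronN, pauliAt_eq_kronN, kronN_mul]
  calc (∑ l : Fin N → Fin 2, ∑ k : Fin N → Fin 2,
        (((∑ m : Fin N, pauliAt N m.1 pauliX) * (∑ m : Fin N, pauliAt N m.1 pauliX)) l k)
          • (krausOp N p l * krausOp N p k))
      = ∑ l : Fin N → Fin 2, ∑ k : Fin N → Fin 2, ∑ m : Fin N, ∑ m' : Fin N,
          ((kronN N (fun j => (if j = m then pauliX else 1) * (if j = m' then pauliX else 1))) l k)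
            • (krausOp N p l * krausOp N p k) :=
        Finset.sum_congr rfl fun l _ => Finset.sum_congr rfl fun k _ => hentry l k
    _ = ∑ l : Fin N → Fin 2, ∑ m : Fin N, ∑ k : Fin N → Fin 2, ∑ m' : Fin N,
          ((kronN N (fun j => (if j = m then pauliX else 1) * (if j = m' then pauliX else 1))) l k)
            • (krausOp N p l * krausOp N p k) :=
        Finset.sum_congr rfl fun l _ => Finset.sum_comm
    _ = ∑ m : Fin N, ∑ l : Fin N → Fin 2, ∑ k : Fin N → Fin 2, ∑ m' : Fin N,
          ((kronN N (fun j => (if j = m then pauliX else 1) * (if j = m' then pauliX else 1))) l k)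
            • (krausOp N p l * krausOp N p k) := Finset.sum_comm
    _ = ∑ m : Fin N, ∑ l : Fin N → Fin 2, ∑ m' : Fin N, ∑ k : Fin N → Fin 2,
          ((kronN N (fun j => (if j = m then pauliX else 1) * (if j = m' then pauliX else 1))) l k)
            • (krausOp N p l * krausOp N p k) :=
        Finset.sum_congr rfl fun m _ => Finset.sum_congr rfl fun l _ => Finset.sum_comm
    _ = ∑ m : Fin N, ∑ m' : Fin N, ∑ l : Fin N → Fin 2, ∑ k : Fin N → Fin 2,
          ((kronN N (fun j => (if j = m then pauliX else 1) * (if j = m' then pauliX else 1))) l k)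
            • (krausOp N p l * krausOp N p k) :=
        Finset.sum_congr rfl fun m _ => Finset.sum_comm
    _ = ∑ m : Fin N, ∑ m' : Fin N,
          (if m = m' then (1 : Matrix (Fin N → Fin 2) (Fin N → Fin 2) ℂ)
            else Q ^ 2 • (pauliAt N m.1 pauliZ * pauliAt N m'.1 pauliZ)) :=
        Finset.sum_congr rfl fun m _ => Finset.sum_congr rfl fun m' _ =>
          T_eq N p hp0 hp1 m m'
    _ = ∑ m : Fin N, ∑ m' : Fin N,
          ((if m = m' then
                (1 : Matrix (Fin N → Fin 2) (Fin N → Fin 2) ℂ)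
                  - Q ^ 2 • (pauliAt N m.1 pauliZ * pauliAt N m'.1 pauliZ)
              else 0)
            + Q ^ 2 • (pauliAt N m.1 pauliZ * pauliAt N m'.1 pauliZ)) := by
        refine Finset.sum_congr rfl fun m _ => Finset.sum_congr rfl fun m' _ => ?_
        by_cases h : m = m'
        · rw [if_pos h, if_pos h, sub_add_cancel]
        · rw [if_neg h, if_neg h, zero_add]
    _ = ((N : ℂ) * (1 - Q ^ 2)) • (1 : Matrix (Fin N → Fin 2) (Fin N → Fin 2) ℂ)
        + Q ^ 2 • ((∑ m : Fin N, pauliAt N m.1 pauliZ) * (∑ m : Fin N, pauliAt N m.1 pauliZ)) := by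
        rw [Finset.sum_congr rfl (fun m (_ : m ∈ Finset.univ) => Finset.sum_add_distrib),
          Finset.sum_add_distrib]
        congr 1
        · -- diagonal part
          rw [Finset.sum_congr rfl (fun m (_ : m ∈ Finset.univ) =>
            Finset.sum_ite_eq Finset.univ m (fun m' =>
              (1 : Matrix (Fin N → Fin 2) (Fin N → Fin 2) ℂ)
                - Q ^ 2 • (pauliAt N m.1 pauliZ * pauliAt N m'.1 pauliZ)))]
          simp only [Finset.mem_univ, if_true]
          rw [Finset.sum_congr rfl (fun m (_ : m ∈ Finset.univ) => by
            rw [pauliAt_mul_self N m])]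
          rw [Finset.sum_const, Finset.card_univ, Fintype.card_fin]
          rw [show ((1 : Matrix (Fin N → Fin 2) (Fin N → Fin 2) ℂ) - Q ^ 2 • 1)
              = (1 - Q ^ 2) • (1 : Matrix (Fin N → Fin 2) (Fin N → Fin 2) ℂ) by
            rw [sub_smul, one_smul]]
          rw [mul_smul, Nat.cast_smul_eq_nsmul]
        · -- off-diagonal part
          rw [Finset.sum_mul_sum, Finset.smul_sum]
          exact Finset.sum_congr rfl fun m _ => (Finset.smul_sum).symm


/-- With `q = 2√(p(1-p))`, `M = Σ_{l,k} S_l ⟨l|S_x|k⟩ S_k`,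
`M₂ = Σ_{l,k} S_l ⟨l|S_x²|k⟩ S_k`, and for a unit vector `ψ` the quantities
`v = ⟨S_z²⟩ - ⟨S_z⟩²`, `Ξ = ⟨S_z M⟩ - ⟨S_z⟩⟨M⟩`, `Ω = ⟨M₂⟩ - ⟨M⟩²`, one has `Ξ = q v`,
`Ω = N(1-q²) + q² v`, and if `v > 0` the minimum over `α ∈ ℝ` of `4(v + 2αΞ + α²Ω)`
equals `4 N v (1-q²) / (N(1-q²) + q² v)`. -/
theorem escher_bound_local_dephasing
    (N : ℕ) (hN : 1 ≤ N) (p : ℝ) (hp0 : 0 < p) (hp1 : p < 1)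
    (q : ℝ) (hq : q = 2 * Real.sqrt (p * (1 - p)))
    (Sx Sz M M₂ : Matrix (Fin N → Fin 2) (Fin N → Fin 2) ℂ)
    (hSx : Sx = ∑ i : Fin N, pauliAt N i.1 pauliX)
    (hSz : Sz = ∑ i : Fin N, pauliAt N i.1 pauliZ)
    (hM : M = ∑ l : Fin N → Fin 2, ∑ k : Fin N → Fin 2,
      (Sx l k) • (krausOp N p l * krausOp N p k))
    (hM₂ : M₂ = ∑ l : Fin N → Fin 2, ∑ k : Fin N → Fin 2,
      ((Sx * Sx) l k) • (krausOp N p l * krausOp N p k))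
    (ψ : (Fin N → Fin 2) → ℂ) (hψ : star ψ ⬝ᵥ ψ = 1)
    (v Ξ Ω : ℂ)
    (hv : v = star ψ ⬝ᵥ (Sz * Sz).mulVec ψ - (star ψ ⬝ᵥ Sz.mulVec ψ) ^ 2)
    (hΞ : Ξ = star ψ ⬝ᵥ (Sz * M).mulVec ψ -
      (star ψ ⬝ᵥ Sz.mulVec ψ) * (star ψ ⬝ᵥ M.mulVec ψ))
    (hΩ : Ω = star ψ ⬝ᵥ M₂.mulVec ψ - (star ψ ⬝ᵥ M.mulVec ψ) ^ 2) :
    Ξ = (q : ℂ) * v ∧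
    Ω = (N : ℂ) * (1 - (q : ℂ) ^ 2) + (q : ℂ) ^ 2 * v ∧
    (0 < v.re →
      IsLeast (Set.range fun α : ℝ =>
          (4 * (v + 2 * (α : ℂ) * Ξ + (α : ℂ) ^ 2 * Ω)).re)
        (4 * (N : ℝ) * v.re * (1 - q ^ 2) / ((N : ℝ) * (1 - q ^ 2) + q ^ 2 * v.re))) := by
  have hp0' : (0 : ℝ) ≤ p := hp0.le
  have hp1' : p ≤ 1 := hp1.le
  have hqc : (q : ℂ) = ((2 * Real.sqrt (p * (1 - p)) : ℝ) : ℂ) := by rw [hq]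
  have hMSz : M = (q : ℂ) • Sz := by
    rw [hM, hSx, hSz, hqc]; exact M_eq N p hp0' hp1'
  have hM2Sz : M₂ = ((N : ℂ) * (1 - (q : ℂ) ^ 2)) • 1 + ((q : ℂ)) ^ 2 • (Sz * Sz) := by
    rw [hM₂, hSx, hSz, hqc]; exact M2_eq N p hp0' hp1'
  have hEM : star ψ ⬝ᵥ M.mulVec ψ = (q : ℂ) * (star ψ ⬝ᵥ Sz.mulVec ψ) := by
    rw [hMSz, Matrix.smul_mulVec, dotProduct_smul, smul_eq_mul]
  have hESzM : star ψ ⬝ᵥ (Sz * M).mulVec ψ = (q : ℂ) * (star ψ ⬝ᵥ (Sz * Sz).mulVec ψ) := by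
    rw [hMSz, Matrix.mul_smul, Matrix.smul_mulVec, dotProduct_smul, smul_eq_mul]
  have hEM2 : star ψ ⬝ᵥ M₂.mulVec ψ
      = (N : ℂ) * (1 - (q : ℂ) ^ 2) + (q : ℂ) ^ 2 * (star ψ ⬝ᵥ (Sz * Sz).mulVec ψ) := by
    rw [hM2Sz, Matrix.add_mulVec, dotProduct_add, Matrix.smul_mulVec,
      Matrix.smul_mulVec, dotProduct_smul, dotProduct_smul, Matrix.one_mulVec, hψ,
      smul_eq_mul, smul_eq_mul, mul_one]
  have goal1 : Ξ = (q : ℂ) * v := by rw [hΞ, hESzM, hEM, hv]; ring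
  have goal2 : Ω = (N : ℂ) * (1 - (q : ℂ) ^ 2) + (q : ℂ) ^ 2 * v := by
    rw [hΩ, hEM2, hEM, hv]; ring
  refine ⟨goal1, goal2, fun hvr => ?_⟩
  have hpq : 0 < p * (1 - p) := by nlinarith
  have hq0 : 0 < q := by
    have := Real.sqrt_pos.mpr hpq; rw [hq]; linarith
  have hsq : q ^ 2 = 4 * (p * (1 - p)) := by
    rw [hq, mul_pow, Real.sq_sqrt hpq.le]; ring
  have hq1 : q ^ 2 ≤ 1 := by nlinarith [sq_nonneg (2 * p - 1)]
  have hNpos : (0 : ℝ) ≤ (N : ℝ) := Nat.cast_nonneg N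
  have ha : 0 < (N : ℝ) * (1 - q ^ 2) + q ^ 2 * v.re := by
    have h1 : 0 < q ^ 2 * v.re := by positivity
    nlinarith
  have hre : ∀ α : ℝ, (4 * (v + 2 * (α : ℂ) * Ξ + (α : ℂ) ^ 2 * Ω)).re
      = 4 * v.re + 8 * α * q * v.re + 4 * α ^ 2 * ((N : ℝ) * (1 - q ^ 2))
        + 4 * α ^ 2 * q ^ 2 * v.re := by
    intro α
    have hc : 4 * (v + 2 * (α : ℂ) * Ξ + (α : ℂ) ^ 2 * Ω)
        = (((4 + 8 * α * q + 4 * α ^ 2 * q ^ 2 : ℝ)) : ℂ) * v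
          + (((4 * α ^ 2 * ((N : ℝ) * (1 - q ^ 2)) : ℝ)) : ℂ) := by
      rw [goal1, goal2]; push_cast; ring
    rw [hc, Complex.add_re, Complex.re_ofReal_mul, Complex.ofReal_re]
    ring
  constructor
  · refine ⟨-(q * v.re) / ((N : ℝ) * (1 - q ^ 2) + q ^ 2 * v.re), ?_⟩
    simp only [hre]
    obtain ⟨D, hDdef⟩ : ∃ D, D = (N : ℝ) * (1 - q ^ 2) + q ^ 2 * v.re := ⟨_, rfl⟩
    rw [← hDdef]
    have hD : D ≠ 0 := hDdef ▸ ha.ne'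
    have hA : (N : ℝ) * (1 - q ^ 2) = D - q ^ 2 * v.re := by rw [hDdef]; ring
    rw [hA, show 4 * (N : ℝ) * v.re * (1 - q ^ 2) = 4 * v.re * ((N : ℝ) * (1 - q ^ 2)) by ring, hA]
    field_simp
    ring
  · rintro x ⟨α, rfl⟩
    simp only [hre]
    rw [div_le_iff₀ ha]
    nlinarith [sq_nonneg (((N : ℝ) * (1 - q ^ 2) + q ^ 2 * v.re) * α + q * v.re)]
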